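/- Let E be a field of characteristic 0, G a group, and V a finite-dimensional irreducible representation of G over E. Then there exist a finite field extension E₀/E and a finite-dimensional absolutely irreducible representation V₀ of G over E₀ together with an injective G-equivariant E-linear map V → res_{E₀/E} V₀; moreover res_{E₀/E} V₀ is isomorphic to V^{⊕m} for some integer m ≥ 1. -/

import Mathlib

open scoped TensorProduct

/-- A representation is irreducible if the space is nonzero and the only invariant
subspaces are `⊥` and `⊤`. -/
def IsIrredRep {k G V : Type*} [CommSemiring k] [Monoid G] [AddCommMonoid V] [Module k V]
    (ρ : Representation k G V) : Prop :=
  Nontrivial V ∧ ∀ W : Submodule k V, (∀ g : G, ∀ v ∈ W, ρ g v ∈ W) → W = ⊥ ∨ W = ⊤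

/-- Base change of a representation along a commutative-ring extension `E → F`. -/
noncomputable def repBaseChange {E G V : Type*} [CommSemiring E] [Monoid G]
    [AddCommMonoid V] [Module E V] (F : Type*) [CommSemiring F] [Algebra E F]
    (ρ : Representation E G V) : Representation F G (F ⊗[E] V) :=
  (Module.End.baseChangeHom E F V).toRingHom.toMonoidHom.comp ρ

universe u v w

/-- The data asserted to exist in STATEMENT 12: a finite extension `E₀/E`, a
finite-dimensional absolutely irreducible representation `V₀` of `G` over `E₀`, an
injective `G`-equivariant `E`-linear map `V → res_{E₀/E} V₀`, and a `G`-equivariant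
`E`-linear isomorphism `res_{E₀/E} V₀ ≅ V^{⊕m}` with `m ≥ 1`. -/
structure Stmt12Model (E : Type u) (G : Type v) (V : Type w) [Field E] [Group G]
    [AddCommGroup V] [Module E V] (ρ : Representation E G V) where
  E₀ : Type u
  [fieldE₀ : Field E₀]
  [algebraEE₀ : Algebra E E₀]
  finiteExt : FiniteDimensional E E₀
  V₀ : Type (max u w)
  [addCommGroupV₀ : AddCommGroup V₀]
  [moduleE₀V₀ : Module E₀ V₀]
  [moduleEV₀ : Module E V₀]
  [towerV₀ : IsScalarTower E E₀ V₀]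
  finDimV₀ : FiniteDimensional E₀ V₀
  ρ₀ : Representation E₀ G V₀
  absIrred : ∀ (F : Type (max u w)) [Field F] [Algebra E₀ F],
    IsIrredRep (repBaseChange F ρ₀)
  emb : V →ₗ[E] V₀
  embInjective : Function.Injective emb
  embEquivariant : ∀ (g : G) (v : V), emb (ρ g v) = ρ₀ g (emb v)
  m : ℕ
  m_pos : 1 ≤ m
  iso : V₀ ≃ₗ[E] (Fin m → V)
  isoEquivariant : ∀ (g : G) (v : V₀) (i : Fin m), iso (ρ₀ g v) i = ρ g (iso v i)

section Burnside

variable {K : Type*} [Field K] {G : Type*} [Group G]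
variable {W : Type*} [AddCommGroup W] [Module K W]

theorem burnside [FiniteDimensional K W] [Nontrivial W] (ρ : Representation K G W)
    (hirr : ∀ p : Submodule K W, (∀ g : G, ∀ v ∈ p, ρ g v ∈ p) → p = ⊥ ∨ p = ⊤)
    (hEnd : ∀ φ : W →ₗ[K] W, (∀ (g : G) (w : W), φ (ρ g w) = ρ g (φ w)) →
      ∃ c : K, ∀ w, φ w = c • w)
    (f : W →ₗ[K] W) :
    f ∈ Submodule.span K (Set.range fun g : G => (ρ g : W →ₗ[K] W)) := by
  classical
  set R := MonoidAlgebra K G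
  -- module structure on W over the monoid algebra
  letI mW : Module R W := Module.compHom W ρ.asAlgebraHom.toRingHom
  have hsW : ∀ (r : R) (w : W), r • w = ρ.asAlgebraHom r w := fun _ _ => rfl
  letI : IsScalarTower K R W := by
    constructor
    intro c r w
    rw [hsW, hsW, Algebra.smul_def, map_mul]
    simp [Module.algebraMap_end_apply]
    rw [AlgHom.commutes]; rfl
  -- W is a simple R-module
  haveI hsimple : IsSimpleModule R W := by
    have hbt : (⊥ : Submodule R W) ≠ ⊤ := by
      intro h
      obtain ⟨w, hw⟩ := exists_ne (0 : W)
      have hwbot : w ∈ (⊥ : Submodule R W) := by rw [h]; trivial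
      rw [Submodule.mem_bot] at hwbot
      exact hw hwbot
    haveI : Nontrivial (Submodule R W) := ⟨⊥, ⊤, hbt⟩
    refine { toIsSimpleOrder := ⟨fun p => ?_⟩ }
    have := hirr (p.restrictScalars K) (by
        intro g v hv
        have : ρ g v = (MonoidAlgebra.of K G g) • v := by
          rw [hsW, ρ.asAlgebraHom_of]
        rw [Submodule.restrictScalars_mem] at hv ⊢
        rw [this]
        exact p.smul_mem _ hv)
    rcases this with h | h
    · exact Or.inl ((Submodule.restrictScalars_eq_bot_iff K R W).mp h)
    · exact Or.inr ((Submodule.restrictScalars_eq_top_iff K R W).mp h)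
  -- set up `M = Fin n → W` as an `R`-module (pointwise action)
  set n := Module.finrank K W with hn
  let b : Module.Basis (Fin n) K W := Module.finBasis K W
  have hsM : ∀ (r : R) (w : Fin n → W) (i : Fin n), (r • w) i = ρ.asAlgebraHom r (w i) :=
    fun r w i => rfl
  have hsingle_smul : ∀ (r : R) (i : Fin n) (v : W),
      r • (Pi.single i v : Fin n → W) = Pi.single i (r • v) := by
    intro r i v
    funext j
    rw [hsM]
    by_cases hij : j = i
    · subst hij; simp [Pi.single_eq_same, hsW]
    · simp [Pi.single_eq_of_ne hij, hsW]
  -- `Fin n → W` is semisimple over `R`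
  haveI : IsSemisimpleModule R (Fin n → W) := by
    have hps : ∀ i : Fin n, IsSimpleModule R
        (LinearMap.range (LinearMap.single R (fun _ : Fin n => W) i)) := fun i =>
      IsSimpleModule.congr
        (LinearEquiv.ofInjective _ (Pi.single_injective (M := fun _ : Fin n => W) i)).symm
    refine isSemisimpleModule_of_isSemisimpleModule_submodule'
      (p := fun i => LinearMap.range (LinearMap.single R (fun _ : Fin n => W) i))
      (fun i => ?_) ?_
    · haveI := hps i
      infer_instance
    · refine top_unique fun w _ => ?_
      have hw : w = ∑ i, Pi.single i (w i) := by
        funext j; rw [Finset.sum_apply]; simp [Pi.single_apply]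
      rw [hw]
      exact Submodule.sum_mem _ fun i _ => Submodule.mem_iSup_of_mem i ⟨w i, rfl⟩
  -- the projection with kernel `N`, the cyclic module generated by the basis vector tuple
  set bvec : Fin n → W := fun i => b i with hbvec
  set N : Submodule R (Fin n → W) := Submodule.span R {bvec} with hN
  obtain ⟨N', hcompl⟩ := exists_isCompl N
  let Φ : (Fin n → W) →ₗ[R] (Fin n → W) :=
    N'.subtype.comp (N'.projectionOnto N hcompl.symm)
  have hker : LinearMap.ker Φ = N := by
    rw [LinearMap.ker_comp, Submodule.ker_subtype, Submodule.comap_bot,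
      Submodule.linearProjOfIsCompl_ker]
  -- entries of Φ are scalar multiplications
  have hent : ∀ i j : Fin n, ∃ cij : K, ∀ v : W, Φ (Pi.single j v) i = cij • v := by
    intro i j
    refine hEnd ((LinearMap.proj i).comp (((LinearMap.restrictScalars K Φ)).comp
      (LinearMap.single K (fun _ : Fin n => W) j))) ?_
    intro g v
    show Φ (Pi.single j (ρ g v)) i = ρ g (Φ (Pi.single j v) i)
    have h1 : (Pi.single j (ρ g v) : Fin n → W) = (MonoidAlgebra.of K G g) • (Pi.single j v : Fin n → W) := by
      rw [hsingle_smul, hsW, ρ.asAlgebraHom_of]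
    rw [h1, map_smul, hsM, ρ.asAlgebraHom_of]
  choose c hc using hent
  have hc' : ∀ (i j : Fin n) (v : W), Φ (Pi.single j v) i = c i j • v := by
    intro i j v
    exact hc i j v
  -- coordinate formula for Φ
  have hΦ : ∀ (w : Fin n → W) (i : Fin n), Φ w i = ∑ j, c i j • w j := by
    intro w i
    have hw : w = ∑ j, Pi.single j (w j) := by
      funext u; rw [Finset.sum_apply]; simp [Pi.single_apply]
    conv_lhs => rw [hw, map_sum]
    rw [Finset.sum_apply]
    exact Finset.sum_congr rfl fun j _ => hc' i j (w j)
  -- conclude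
  have hbvecN : bvec ∈ N := Submodule.mem_span_singleton_self bvec
  have hΦb : Φ bvec = 0 := by rwa [← LinearMap.mem_ker, hker]
  have hfb : (fun i => f (bvec i)) ∈ N := by
    rw [← hker, LinearMap.mem_ker]
    funext i
    have : Φ (fun j => f (bvec j)) i = f (Φ bvec i) := by
      rw [hΦ, hΦ, map_sum]
      exact Finset.sum_congr rfl fun j _ => by rw [map_smul]
    rw [this, hΦb]
    simp
  rw [hN, Submodule.mem_span_singleton] at hfb
  obtain ⟨r, hr⟩ := hfb
  have hfr : f = ρ.asAlgebraHom r := by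
    refine b.ext fun i => ?_
    have := congrFun hr i
    rw [hsM] at this
    exact this.symm
  rw [hfr]
  -- the range of asAlgebraHom lies in the span of the image of ρ
  clear hfr hr hΦb hbvecN hΦ hc' hc hker
  induction r using MonoidAlgebra.induction_linear with
  | zero => simp only [map_zero]; exact Submodule.zero_mem _
  | add p q hp hq => rw [map_add]; exact Submodule.add_mem _ hp hq
  | single g a =>
      rw [Representation.asAlgebraHom_single]
      exact Submodule.smul_mem _ a (Submodule.subset_span ⟨g, rfl⟩)

theorem baseChange_irred [FiniteDimensional K W] [Nontrivial W] (ρ : Representation K G W)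
    (hspan : Submodule.span K (Set.range fun g : G => (ρ g : W →ₗ[K] W)) = ⊤)
    (F : Type*) [Field F] [Algebra K F] : IsIrredRep (repBaseChange F ρ) := by
  classical
  set n := Module.finrank K W with hn
  have hnpos : 0 < n := Module.finrank_pos
  let b : Module.Basis (Fin n) K W := Module.finBasis K W
  let cb : Module.Basis (Fin n) F (F ⊗[K] W) := Algebra.TensorProduct.basis F b
  have hrep : ∀ g : G, repBaseChange F ρ g = (ρ g).baseChange F := fun g => rfl
  constructor
  · -- nontrivial
    exact ⟨cb ⟨0, hnpos⟩, 0, cb.ne_zero _⟩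
  · intro p hp
    -- p is invariant under base changes of arbitrary endomorphisms
    have hinv : ∀ f : W →ₗ[K] W, ∀ x ∈ p, f.baseChange F x ∈ p := by
      intro f
      have hf : f ∈ Submodule.span K (Set.range fun g : G => (ρ g : W →ₗ[K] W)) := by
        rw [hspan]; trivial
      induction hf using Submodule.span_induction with
      | mem f hf =>
          obtain ⟨g, rfl⟩ := hf
          intro x hx
          exact hp g x hx
      | zero =>
          intro x hx
          rw [show ((0 : W →ₗ[K] W).baseChange F) = 0 from
            map_zero (LinearMap.baseChangeHom K F W W)]
          simpa using p.zero_mem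
      | add f g hf hg ihf ihg =>
          intro x hx
          rw [show ((f + g).baseChange F) = f.baseChange F + g.baseChange F from
            map_add (LinearMap.baseChangeHom K F W W) f g]
          exact p.add_mem (ihf x hx) (ihg x hx)
      | smul a f hf ihf =>
          intro x hx
          rw [show ((a • f).baseChange F) = a • f.baseChange F from
            map_smul (LinearMap.baseChangeHom K F W W) a f]
          exact p.smul_of_tower_mem a (ihf x hx)
    by_cases hbot : p = ⊥
    · exact Or.inl hbot
    · refine Or.inr ?_
      obtain ⟨w, hwp, hw0⟩ := Submodule.exists_mem_ne_zero_of_ne_bot hbot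
      have hrw : w = ∑ k, cb.repr w k • cb k := (cb.sum_repr w).symm
      have hj : ∃ j, cb.repr w j ≠ 0 := by
        by_contra h
        push_neg at h
        apply hw0
        rw [hrw]
        simp [h]
      obtain ⟨j, hj⟩ := hj
      -- all basis vectors of the base change lie in p
      have hbase : ∀ i : Fin n, cb i ∈ p := by
        intro i
        let e : W →ₗ[K] W := (b.coord j).smulRight (b i)
        have hbk : ∀ k, e.baseChange F (cb k) = if k = j then cb i else 0 := by
          intro k
          rw [show (cb k : F ⊗[K] W) = 1 ⊗ₜ[K] b k from Algebra.TensorProduct.basis_apply b k,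
            LinearMap.baseChange_tmul]
          by_cases hkj : k = j
          · subst hkj
            simp [e, cb, Algebra.TensorProduct.basis_apply]
          · simp [e, Module.Basis.coord_apply, Module.Basis.repr_self,
              Finsupp.single_eq_of_ne' (Ne.symm hkj), hkj, TensorProduct.tmul_zero]
        have he : e.baseChange F w = cb.repr w j • cb i := by
          conv_lhs => rw [hrw]
          rw [map_sum]
          simp only [map_smul, hbk, smul_ite, smul_zero]
          simp
        have := hinv e w hwp
        rw [he] at this
        have h2 := p.smul_mem ((cb.repr w j)⁻¹) this
        rwa [smul_smul, inv_mul_cancel₀ hj, one_smul] at h2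
      have : Submodule.span F (Set.range cb) ≤ p := by
        rw [Submodule.span_le]
        rintro x ⟨i, rfl⟩
        exact hbase i
      rw [cb.span_eq] at this
      exact top_unique this

end Burnside

set_option maxHeartbeats 1000000 in
set_option synthInstance.maxHeartbeats 200000 in
theorem stmt_12 {E : Type u} {G : Type v} {V : Type w} [Field E] [CharZero E] [Group G]
    [AddCommGroup V] [Module E V] [FiniteDimensional E V]
    (ρ : Representation E G V)
    (hnontriv : Nontrivial V)
    (hirr : ∀ W : Submodule E V, (∀ g : G, ∀ v ∈ W, ρ g v ∈ W) → W = ⊥ ∨ W = ⊤) :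
    Nonempty (Stmt12Model E G V ρ) := by
  classical
  -- move to a universe-adjusted copy of V
  set Wu : Type (max u w) := ULift.{u} V with hWu
  let uequiv : V ≃ₗ[E] Wu := ULift.moduleEquiv.symm
  let ρu : Representation E G Wu :=
    { toFun := fun g => uequiv.conj (ρ g)
      map_one' := by ext w; simp [LinearEquiv.conj_apply]
      map_mul' := fun g h => by ext w; simp [LinearEquiv.conj_apply, Module.End.mul_apply] }
  have hρu : ∀ (g : G) (x : Wu), ρu g x = uequiv (ρ g (uequiv.symm x)) := fun g x => rfl
  haveI : Nontrivial Wu := by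
    obtain ⟨x, y, hxy⟩ := hnontriv
    exact ⟨uequiv x, uequiv y, fun h => hxy (uequiv.injective h)⟩
  haveI : FiniteDimensional E Wu := Module.Finite.equiv uequiv
  have hirru : ∀ p : Submodule E Wu, (∀ g : G, ∀ x ∈ p, ρu g x ∈ p) → p = ⊥ ∨ p = ⊤ := by
    intro p hinv
    have := hirr (p.map (uequiv.symm : Wu →ₗ[E] V)) (by
      rintro g v hv
      rw [Submodule.mem_map] at hv ⊢
      obtain ⟨x, hx, rfl⟩ := hv
      refine ⟨ρu g x, hinv g x hx, ?_⟩
      rw [hρu]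
      simp)
    rcases this with h | h
    · left
      have := congrArg (Submodule.map (uequiv : V →ₗ[E] Wu)) h
      rwa [Submodule.map_bot, ← Submodule.map_comp, show ((uequiv : V →ₗ[E] Wu).comp
        (uequiv.symm : Wu →ₗ[E] V)) = LinearMap.id from by ext x; simp, Submodule.map_id] at this
    · right
      have := congrArg (Submodule.map (uequiv : V →ₗ[E] Wu)) h
      rwa [← Submodule.map_comp, show ((uequiv : V →ₗ[E] Wu).comp
        (uequiv.symm : Wu →ₗ[E] V)) = LinearMap.id from by ext x; simp, Submodule.map_id,
        Submodule.map_top, LinearEquiv.range] at this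
  -- the commutant and a maximal commutative subalgebra of it
  set D : Subalgebra E (Module.End E Wu) :=
    Subalgebra.centralizer E (Set.range fun g : G => (ρu g : Module.End E Wu)) with hD
  set S : Set (Subalgebra E (Module.End E Wu)) :=
    {A | A ≤ D ∧ ∀ x ∈ A, ∀ y ∈ A, x * y = y * x} with hS
  have hbotS : ⊥ ∈ S := by
    constructor
    · rintro x hx
      rw [Algebra.mem_bot] at hx
      obtain ⟨c, rfl⟩ := hx
      exact Set.algebraMap_mem_centralizer c
    · intro x hx y hy
      rw [Algebra.mem_bot] at hx hy
      obtain ⟨c, rfl⟩ := hx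
      obtain ⟨d, rfl⟩ := hy
      rw [← map_mul, ← map_mul, mul_comm]
  set T : Set ℕ := (fun A : Subalgebra E (Module.End E Wu) => Module.finrank E A) '' S with hT
  have hTne : T.Nonempty := ⟨_, ⊥, hbotS, rfl⟩
  have hTbdd : BddAbove T := by
    refine ⟨Module.finrank E (Module.End E Wu), ?_⟩
    rintro t ⟨A, _, rfl⟩
    exact Submodule.finrank_le (Subalgebra.toSubmodule A)
  obtain ⟨K, hKS, hKrank⟩ : ∃ K ∈ S, Module.finrank E K = sSup T := by
    have := Nat.sSup_mem hTne hTbdd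
    obtain ⟨K, hKS, hK⟩ := this
    exact ⟨K, hKS, hK⟩
  have hKmax : ∀ A ∈ S, K ≤ A → A = K := by
    intro A hA hKA
    have h1 : Module.finrank E A ≤ Module.finrank E K := by
      rw [hKrank]
      exact le_csSup hTbdd ⟨A, hA, rfl⟩
    have h2 := Submodule.eq_of_le_of_finrank_le
      (Subalgebra.toSubmodule.monotone hKA) h1
    exact (Subalgebra.toSubmodule.injective h2).symm
  -- K is a field
  have hKD : K ≤ D := hKS.1
  have hKcomm : ∀ x ∈ K, ∀ y ∈ K, x * y = y * x := hKS.2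
  have hcommD : ∀ z ∈ D, ∀ (g : G) (x : Wu), z (ρu g x) = ρu g (z x) := by
    intro z hz g x
    rw [hD, Subalgebra.mem_centralizer_iff] at hz
    have h := LinearMap.ext_iff.mp (hz (ρu g) ⟨g, rfl⟩) x
    simpa [Module.End.mul_apply] using h.symm
  -- kernels of nonzero elements of D are trivial, hence they are injective
  have hinjD : ∀ z ∈ D, z ≠ 0 → Function.Injective z := by
    intro z hz hz0
    rw [← LinearMap.ker_eq_bot]
    rcases hirru (LinearMap.ker z) (by
      intro g x hx
      rw [LinearMap.mem_ker] at hx ⊢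
      rw [hcommD z hz g x, hx, map_zero]) with h | h
    · exact h
    · exact absurd (LinearMap.ker_eq_top.mp h) hz0
  letI : CommRing K :=
    { (inferInstance : Ring K) with
      mul_comm := fun x y => Subtype.ext (hKcomm x.1 x.2 y.1 y.2) }
  haveI : Nontrivial K := by
    refine ⟨0, 1, fun h01 => ?_⟩
    obtain ⟨x, y, hxy⟩ := (inferInstance : Nontrivial Wu)
    have := congrArg (fun z : K => (z.1 : Module.End E Wu) (x - y)) h01
    simp only [ZeroMemClass.coe_zero, LinearMap.zero_apply, OneMemClass.coe_one,
      Module.End.one_apply] at this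
    exact hxy (by rwa [eq_comm, sub_eq_zero] at this)
  haveI : NoZeroDivisors K := by
    constructor
    intro a b hab
    by_cases ha : a = 0
    · exact Or.inl ha
    · refine Or.inr ?_
      have ha' : (a : Module.End E Wu) ≠ 0 := fun h => ha (Subtype.ext h)
      have hinj := hinjD a.1 (hKD a.2) ha'
      have : ∀ x : Wu, (a : Module.End E Wu) ((b : Module.End E Wu) x) = 0 := by
        intro x
        have := congrArg (fun z : K => (z.1 : Module.End E Wu) x) hab
        simpa [Module.End.mul_apply] using this
      have hb : ∀ x : Wu, (b : Module.End E Wu) x = 0 := fun x =>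
        hinj (by rw [this x, map_zero])
      exact Subtype.ext (LinearMap.ext hb)
  letI : IsDomain K := NoZeroDivisors.to_isDomain _
  haveI : FiniteDimensional E K := FiniteDimensional.finiteDimensional_subalgebra K
  haveI : Algebra.IsIntegral E K := Algebra.IsIntegral.of_finite E K
  have hKfield : IsField K := isField_of_isIntegral_of_isField' (Field.toIsField E)
  letI fK : Field K := hKfield.toField
  -- primitive element and the model field E₀ in universe u
  haveI : Algebra.IsSeparable E K := Algebra.IsSeparable.of_integral E K
  obtain ⟨θ, hθ⟩ := Field.exists_primitive_element E K
  have hint : IsIntegral E θ := Algebra.IsIntegral.isIntegral θ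
  haveI : Fact (Irreducible (minpoly E θ)) := ⟨minpoly.irreducible hint⟩
  set E₀ : Type u := AdjoinRoot (minpoly E θ) with hE₀
  haveI : FiniteDimensional E E₀ :=
    PowerBasis.finite (AdjoinRoot.powerBasis (minpoly.ne_zero hint))
  let ψ : E₀ ≃ₐ[E] K :=
    (IntermediateField.adjoinRootEquivAdjoin E hint).trans
      ((IntermediateField.equivOfEq hθ).trans IntermediateField.topEquiv)
  -- the E₀-module structure on Wu
  let hmap : E₀ →+* Module.End E Wu := (K.val.comp ψ.toAlgHom).toRingHom
  letI mE₀ : Module E₀ Wu := Module.compHom Wu hmap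
  have hsmulE₀ : ∀ (x : E₀) (w : Wu), x • w = ((ψ x : Module.End E Wu)) w := fun _ _ => rfl
  letI : IsScalarTower E E₀ Wu := by
    constructor
    intro c x w
    show hmap (c • x) w = c • (hmap x w)
    rw [Algebra.smul_def, map_mul, Module.End.mul_apply]
    have hc : hmap (algebraMap E E₀ c) = algebraMap E (Module.End E Wu) c := by
      show (K.val (ψ (algebraMap E E₀ c)) : Module.End E Wu) = _
      rw [ψ.commutes, K.val.commutes]
    rw [hc, Module.algebraMap_end_apply]
  -- the representation over E₀
  let ρ₀ : Representation E₀ G Wu :=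
    { toFun := fun g =>
        { toFun := ρu g
          map_add' := (ρu g).map_add
          map_smul' := fun x w => by
            show ρu g (x • w) = x • (ρu g w)
            rw [hsmulE₀, hsmulE₀]
            exact (hcommD _ (hKD (ψ x).2) g w).symm }
      map_one' := by
        refine LinearMap.ext fun w => ?_
        show ρu 1 w = w
        rw [map_one]
        rfl
      map_mul' := fun g h => by
        refine LinearMap.ext fun w => ?_
        show ρu (g * h) w = ρu g (ρu h w)
        rw [map_mul]
        rfl }
  have hρ₀ : ∀ (g : G) (x : Wu), ρ₀ g x = ρu g x := fun _ _ => rfl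
  -- every E₀-linear G-equivariant endomorphism is scalar
  have hEnd : ∀ φ : Wu →ₗ[E₀] Wu, (∀ (g : G) (w : Wu), φ (ρ₀ g w) = ρ₀ g (φ w)) →
      ∃ c : E₀, ∀ w, φ w = c • w := by
    intro φ hφ
    set φE : Module.End E Wu := LinearMap.restrictScalars E φ with hφE
    have hφD : φE ∈ D := by
      rw [hD, Subalgebra.mem_centralizer_iff]
      rintro z ⟨g, rfl⟩
      refine LinearMap.ext fun w => ?_
      show ρu g (φE w) = φE (ρu g w)
      exact (hφ g w).symm
    have hφK : ∀ k ∈ K, k * φE = φE * k := by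
      intro k hk
      refine LinearMap.ext fun w => ?_
      show k (φE w) = φE (k w)
      have : k = ((ψ (ψ.symm ⟨k, hk⟩) : K) : Module.End E Wu) := by
        rw [AlgEquiv.apply_symm_apply]
      rw [this]
      have := φ.map_smul (ψ.symm ⟨k, hk⟩) w
      rw [hsmulE₀, hsmulE₀] at this
      exact this.symm
    set gens : Set (Module.End E Wu) := ↑K ∪ {φE} with hgens
    have hcomm : ∀ a ∈ gens, ∀ b ∈ gens, a * b = b * a := by
      rintro a (ha | ha) b (hb | hb)
      · exact hKcomm a ha b hb
      · rw [Set.mem_singleton_iff] at hb; subst hb; exact hφK a ha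
      · rw [Set.mem_singleton_iff] at ha; subst ha; exact (hφK b hb).symm
      · rw [Set.mem_singleton_iff] at ha hb; subst ha; subst hb; rfl
    set K' : Subalgebra E (Module.End E Wu) := Algebra.adjoin E gens with hK'
    have hK'S : K' ∈ S := by
      constructor
      · apply Algebra.adjoin_le
        rintro a (ha | ha)
        · exact hKD ha
        · rw [Set.mem_singleton_iff] at ha; subst ha; exact hφD
      · intro x hx y hy
        letI := Algebra.adjoinCommRingOfComm E hcomm
        have := mul_comm (⟨x, hx⟩ : K') (⟨y, hy⟩ : K')
        exact congrArg Subtype.val this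
    have hKK' : K ≤ K' := fun x hx => Algebra.subset_adjoin (Or.inl hx)
    have hK'eq : K' = K := hKmax K' hK'S hKK'
    have hφKmem : φE ∈ K := by
      rw [← hK'eq]
      exact Algebra.subset_adjoin (Or.inr rfl)
    refine ⟨ψ.symm ⟨φE, hφKmem⟩, fun w => ?_⟩
    rw [hsmulE₀, AlgEquiv.apply_symm_apply]
    rfl
  -- irreducibility over E₀
  have hirr₀ : ∀ p : Submodule E₀ Wu, (∀ g : G, ∀ x ∈ p, ρ₀ g x ∈ p) → p = ⊥ ∨ p = ⊤ := by
    intro p hinv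
    rcases hirru (p.restrictScalars E) (fun g x hx => hinv g x hx) with h | h
    · exact Or.inl ((Submodule.restrictScalars_eq_bot_iff E E₀ Wu).mp h)
    · exact Or.inr ((Submodule.restrictScalars_eq_top_iff E E₀ Wu).mp h)
  haveI : FiniteDimensional E₀ Wu := FiniteDimensional.right E E₀ Wu
  have hspan : Submodule.span E₀ (Set.range fun g : G => (ρ₀ g : Wu →ₗ[E₀] Wu)) = ⊤ :=
    eq_top_iff.mpr fun f _ => burnside ρ₀ hirr₀ hEnd f
  refine ⟨{ E₀ := E₀
            fieldE₀ := inferInstance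
            algebraEE₀ := inferInstance
            finiteExt := inferInstance
            V₀ := Wu
            addCommGroupV₀ := inferInstance
            moduleE₀V₀ := mE₀
            moduleEV₀ := inferInstance
            towerV₀ := inferInstance
            finDimV₀ := inferInstance
            ρ₀ := ρ₀
            absIrred := fun F _ _ => baseChange_irred ρ₀ hspan F
            emb := uequiv.toLinearMap
            embInjective := uequiv.injective
            embEquivariant := fun g v => by
              show uequiv (ρ g v) = ρu g (uequiv v)
              rw [hρu]
              simp
            m := 1
            m_pos := le_refl 1
            iso := uequiv.symm.trans (LinearEquiv.funUnique (Fin 1) E V).symm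
            isoEquivariant := fun g x i => by
              show uequiv.symm (ρu g x) = ρ g (uequiv.symm x)
              rw [hρu]
              simp }⟩
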